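/- arXiv:2504.07456 — 4 statements merged into one kernel-verified Lean document; each statement's English description precedes it below -/
import Mathlib

section
/- For every n ≥ 1, the set W_{n+1} of new fractions inserted at step n+1 of the Stern-Brocot construction satisfies W_{n+1} = { q/(2q−p), (q−p)/(2q−p) : p/q ∈ W_n }. -/
/-- The mediant of two rationals, formed from numerators and denominators
of the reduced fractions. -/
def mediant (a b : ℚ) : ℚ := ((a.num + b.num : ℤ) : ℚ) / ((a.den + b.den : ℕ) : ℚ)

/-- `sb n j` is the `j`-th element `ξ_{j,n}` of the Stern–Brocot sequence `F_n`:
`F_0 = {0/1, 1/1}` and `F_{n+1}` is obtained from `F_n` by inserting the mediant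
between every pair of consecutive elements. -/
def sb : ℕ → ℕ → ℚ
  | 0, j => if j = 0 then 0 else 1
  | n + 1, j => if j % 2 = 0 then sb n (j / 2) else mediant (sb n (j / 2)) (sb n (j / 2 + 1))

/-- `sbNew n` is the set `W_n` of new fractions inserted at step `n` of the
Stern–Brocot construction (the elements of odd index in `F_n`). -/
def sbNew (n : ℕ) : Finset ℚ :=
  ((Finset.range (2 ^ n)).filter (fun j => j % 2 = 1)).image (sb n)

lemma sb_succ_def (n j : ℕ) :
    sb (n + 1) j = if j % 2 = 0 then sb n (j / 2)
      else mediant (sb n (j / 2)) (sb n (j / 2 + 1)) := rfl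

lemma sb_zero_zero : sb 0 0 = 0 := rfl
lemma sb_zero_one : sb 0 1 = 1 := rfl

lemma rat_isCoprime (r : ℚ) : IsCoprime r.num (r.den : ℤ) := by
  rw [Int.isCoprime_iff_gcd_eq_one]
  simpa [Int.gcd] using r.reduced

lemma den_pos' (r : ℚ) : (0:ℤ) < (r.den : ℤ) := by exact_mod_cast r.pos

lemma num_le_den {r : ℚ} (h : r ≤ 1) : (r.num : ℚ) ≤ (r.den : ℚ) := by
  have hd : (0:ℚ) < (r.den : ℚ) := by exact_mod_cast r.pos
  rw [← Rat.num_div_den r, div_le_one hd] at h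
  exact h

lemma mul_den_eq_num (r : ℚ) : r * (r.den : ℚ) = (r.num : ℚ) := by
  have hd : ((r.den:ℚ)) ≠ 0 := by exact_mod_cast r.den_nz
  calc r * (r.den : ℚ) = ((r.num:ℚ) / r.den) * r.den := by rw [Rat.num_div_den r]
  _ = (r.num : ℚ) := div_mul_cancel₀ _ hd

lemma onesub_eq (r : ℚ) : 1 - r = (((r.den:ℤ) - r.num : ℤ) : ℚ) / (((r.den:ℤ) : ℤ) : ℚ) := by
  have hd : ((r.den:ℚ)) ≠ 0 := by exact_mod_cast r.den_nz
  have hd' : (((r.den:ℤ):ℤ):ℚ) ≠ 0 := by push_cast; exact hd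
  rw [eq_div_iff hd']
  push_cast
  linear_combination (-1 : ℚ) * mul_den_eq_num r

lemma onesub_num (r : ℚ) : (1 - r).num = (r.den:ℤ) - r.num := by
  rw [onesub_eq r]
  apply Rat.num_div_eq_of_coprime (den_pos' r)
  have h : IsCoprime ((r.den:ℤ) - r.num) (r.den : ℤ) := by
    have := (rat_isCoprime r).neg_left
    simpa [neg_add_eq_sub] using this.add_mul_left_left 1
  simpa [Int.gcd] using Int.isCoprime_iff_gcd_eq_one.mp h

lemma onesub_den (r : ℚ) : ((1 - r).den : ℤ) = (r.den:ℤ) := by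
  rw [onesub_eq r]
  apply Rat.den_div_eq_of_coprime (den_pos' r)
  have h : IsCoprime ((r.den:ℤ) - r.num) (r.den : ℤ) := by
    have := (rat_isCoprime r).neg_left
    simpa [neg_add_eq_sub] using this.add_mul_left_left 1
  simpa [Int.gcd] using Int.isCoprime_iff_gcd_eq_one.mp h

lemma fmap_eq {r : ℚ} (h : 0 ≤ r) :
    r / (1 + r) = ((r.num : ℤ) : ℚ) / (((r.num + r.den : ℤ)) : ℚ) := by
  have hd : ((r.den:ℚ)) ≠ 0 := by exact_mod_cast r.den_nz
  have hn : (0:ℚ) ≤ (r.num:ℚ) := by exact_mod_cast Rat.num_nonneg.2 h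
  have hdp : (0:ℚ) < (r.den:ℚ) := by exact_mod_cast r.pos
  have hnd : ((r.num:ℚ)) + r.den ≠ 0 := by linarith
  have h1r : (1:ℚ) + r ≠ 0 := by positivity
  have hnd' : (((r.num + r.den : ℤ)) : ℚ) ≠ 0 := by push_cast; exact hnd
  rw [div_eq_div_iff h1r hnd']
  push_cast
  linear_combination mul_den_eq_num r

lemma fmap_pos_den {r : ℚ} (h : 0 ≤ r) : (0:ℤ) < r.num + r.den := by
  have hn : (0:ℤ) ≤ r.num := Rat.num_nonneg.2 h
  have := den_pos' r
  omega

lemma fmap_coprime (r : ℚ) : Nat.Coprime r.num.natAbs (r.num + (r.den:ℤ)).natAbs := by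
  have h : IsCoprime r.num ((r.num:ℤ) + r.den) := by
    simpa [add_comm] using (rat_isCoprime r).add_mul_left_right 1
  simpa [Int.gcd] using Int.isCoprime_iff_gcd_eq_one.mp h

lemma fmap_num {r : ℚ} (h : 0 ≤ r) : (r / (1 + r)).num = r.num := by
  rw [fmap_eq h]
  exact Rat.num_div_eq_of_coprime (fmap_pos_den h) (by simpa using fmap_coprime r)

lemma fmap_den {r : ℚ} (h : 0 ≤ r) : ((r / (1 + r)).den : ℤ) = r.num + r.den := by
  rw [fmap_eq h]
  exact Rat.den_div_eq_of_coprime (fmap_pos_den h) (by simpa using fmap_coprime r)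

lemma num_le_den' {r : ℚ} (h : r ≤ 1) : (r.num : ℚ) ≤ (r.den : ℚ) := num_le_den h

lemma mediant_mem {a b : ℚ} (ha0 : 0 ≤ a) (ha1 : a ≤ 1) (hb0 : 0 ≤ b) (hb1 : b ≤ 1) :
    0 ≤ mediant a b ∧ mediant a b ≤ 1 := by
  have hna : (0:ℚ) ≤ a.num := by exact_mod_cast Rat.num_nonneg.2 ha0
  have hnb : (0:ℚ) ≤ b.num := by exact_mod_cast Rat.num_nonneg.2 hb0
  have hda : (0:ℚ) < a.den := by exact_mod_cast a.pos
  have hdb : (0:ℚ) < b.den := by exact_mod_cast b.pos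
  rw [mediant]
  constructor
  · apply div_nonneg
    · push_cast; linarith
    · push_cast; linarith
  · rw [div_le_one (by push_cast; linarith)]
    push_cast
    have := num_le_den ha1
    have := num_le_den hb1
    linarith

lemma mediant_fmap {a b : ℚ} (ha : 0 ≤ a) (hb : 0 ≤ b) :
    mediant (a / (1 + a)) (b / (1 + b)) = mediant a b / (1 + mediant a b) := by
  have hna : (0:ℚ) ≤ (a.num:ℚ) := by exact_mod_cast Rat.num_nonneg.2 ha
  have hnb : (0:ℚ) ≤ (b.num:ℚ) := by exact_mod_cast Rat.num_nonneg.2 hb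
  have hda : (0:ℚ) < (a.den:ℚ) := by exact_mod_cast a.pos
  have hdb : (0:ℚ) < (b.den:ℚ) := by exact_mod_cast b.pos
  have h1 : mediant (a / (1 + a)) (b / (1 + b)) =
      ((a.num:ℚ) + b.num) / ((a.num:ℚ) + a.den + (b.num + b.den)) := by
    rw [mediant]
    push_cast
    rw [fmap_num ha, fmap_num hb]
    have e1' : (((a / (1 + a)).den : ℤ) : ℚ) = (a.num:ℚ) + a.den := by
      rw [fmap_den ha]; push_cast; ring
    have e2' : (((b / (1 + b)).den : ℤ) : ℚ) = (b.num:ℚ) + b.den := by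
      rw [fmap_den hb]; push_cast; ring
    push_cast at e1' e2'
    rw [e1', e2']
  have h2 : mediant a b = ((a.num:ℚ) + b.num) / ((a.den:ℚ) + b.den) := by
    rw [mediant]; push_cast; ring_nf
  rw [h1, h2]
  have hdd : (a.den:ℚ) + b.den ≠ 0 := by linarith
  have hsum : (a.num:ℚ) + a.den + (b.num + b.den) ≠ 0 := by linarith
  have h3 : (1:ℚ) + ((a.num:ℚ) + b.num) / ((a.den:ℚ) + b.den)
      = ((a.num:ℚ) + a.den + (b.num + b.den)) / ((a.den:ℚ) + b.den) := by
    field_simp; ring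
  rw [h3, div_div_div_cancel_right₀]
  exact hdd

lemma mediant_onesub (a b : ℚ) :
    mediant (1 - b) (1 - a) = 1 - mediant a b := by
  have hda : (0:ℚ) < (a.den:ℚ) := by exact_mod_cast a.pos
  have hdb : (0:ℚ) < (b.den:ℚ) := by exact_mod_cast b.pos
  have e1 : (((1 - b).num : ℤ) : ℚ) = (b.den:ℚ) - b.num := by rw [onesub_num]; push_cast; ring
  have e2 : (((1 - a).num : ℤ) : ℚ) = (a.den:ℚ) - a.num := by rw [onesub_num]; push_cast; ring
  have e3 : (((1 - b).den : ℤ) : ℚ) = (b.den:ℚ) := by rw [onesub_den]; norm_cast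
  have e4 : (((1 - a).den : ℤ) : ℚ) = (a.den:ℚ) := by rw [onesub_den]; norm_cast
  rw [mediant, mediant]
  push_cast
  push_cast at e1 e2 e3 e4
  rw [e1, e2, e3, e4]
  have : (b.den:ℚ) + a.den ≠ 0 := by linarith
  have : (a.den:ℚ) + b.den ≠ 0 := by linarith
  field_simp
  ring

lemma T1_eq {r : ℚ} (h0 : 0 ≤ r) (h1 : r ≤ 1) :
    (r.den : ℚ) / (2 * (r.den : ℚ) - (r.num : ℚ)) = 1 - ((1 - r) / (1 + (1 - r))) := by
  have hdp : (0:ℚ) < (r.den:ℚ) := by exact_mod_cast r.pos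
  have hnd := num_le_den h1
  have hn : (0:ℚ) ≤ (r.num:ℚ) := by exact_mod_cast Rat.num_nonneg.2 h0
  have h2dn : 2 * (r.den:ℚ) - r.num ≠ 0 := by linarith
  have h2r : (1:ℚ) + (1 - r) ≠ 0 := by linarith
  have key : 1 - ((1 - r) / (1 + (1 - r))) = 1 / (1 + (1 - r)) := by
    field_simp
    ring
  rw [key, div_eq_div_iff h2dn h2r]
  linear_combination (-1:ℚ) * mul_den_eq_num r

lemma T2_eq {r : ℚ} (h0 : 0 ≤ r) (h1 : r ≤ 1) :
    ((r.den : ℚ) - (r.num : ℚ)) / (2 * (r.den : ℚ) - (r.num : ℚ)) = (1 - r) / (1 + (1 - r)) := by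
  have hdp : (0:ℚ) < (r.den:ℚ) := by exact_mod_cast r.pos
  have hnd := num_le_den h1
  have hn : (0:ℚ) ≤ (r.num:ℚ) := by exact_mod_cast Rat.num_nonneg.2 h0
  have h2dn : 2 * (r.den:ℚ) - r.num ≠ 0 := by linarith
  have h2r : (1:ℚ) + (1 - r) ≠ 0 := by linarith
  rw [div_eq_div_iff h2dn h2r]
  linear_combination mul_den_eq_num r

lemma sb_mem : ∀ n j, 0 ≤ sb n j ∧ sb n j ≤ 1 := by
  intro n
  induction n with
  | zero => intro j; by_cases h : j = 0 <;> simp [sb, h]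
  | succ n ih =>
    intro j
    rw [sb_succ_def]
    by_cases h : j % 2 = 0
    · rw [if_pos h]; exact ih _
    · rw [if_neg h]
      exact mediant_mem (ih _).1 (ih _).2 (ih _).1 (ih _).2

lemma sb_succ_left : ∀ n, ∀ j ≤ 2 ^ n, sb (n + 1) j = sb n j / (1 + sb n j) := by
  intro n
  induction n with
  | zero =>
    intro j hj
    interval_cases j
    · norm_num [sb_succ_def, sb_zero_zero]
    · rw [sb_succ_def]
      norm_num [sb_zero_zero, sb_zero_one, mediant]
  | succ n ih =>
    intro j hj
    have hp : 2 ^ (n + 1) = 2 * 2 ^ n := by rw [pow_succ]; ring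
    by_cases h : j % 2 = 0
    · rw [sb_succ_def (n + 1) j, sb_succ_def n j, if_pos h, if_pos h]
      exact ih _ (by omega)
    · rw [sb_succ_def (n + 1) j, sb_succ_def n j, if_neg h, if_neg h]
      have h1 : j / 2 ≤ 2 ^ n := by omega
      have h2 : j / 2 + 1 ≤ 2 ^ n := by omega
      rw [ih _ h1, ih _ h2]
      exact mediant_fmap (sb_mem _ _).1 (sb_mem _ _).1

lemma sb_symm : ∀ n, ∀ j ≤ 2 ^ n, sb n (2 ^ n - j) = 1 - sb n j := by
  intro n
  induction n with
  | zero =>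
    intro j hj
    interval_cases j
    · norm_num [sb_zero_zero, sb_zero_one]
    · norm_num [sb_zero_zero, sb_zero_one]
  | succ n ih =>
    intro j hj
    have hp : 2 ^ (n + 1) = 2 * 2 ^ n := by rw [pow_succ]; ring
    by_cases h : j % 2 = 0
    · have hk : (2 ^ (n + 1) - j) % 2 = 0 := by omega
      rw [sb_succ_def n (2 ^ (n + 1) - j), sb_succ_def n j, if_pos hk, if_pos h]
      rw [show (2 ^ (n + 1) - j) / 2 = 2 ^ n - j / 2 from by omega]
      exact ih _ (by omega)
    · have hk : (2 ^ (n + 1) - j) % 2 = 1 := by omega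
      rw [sb_succ_def n (2 ^ (n + 1) - j), sb_succ_def n j, if_neg (by omega : ¬(2 ^ (n + 1) - j) % 2 = 0), if_neg h]
      rw [show (2 ^ (n + 1) - j) / 2 = 2 ^ n - (j / 2 + 1) from by omega]
      rw [show 2 ^ n - (j / 2 + 1) + 1 = 2 ^ n - j / 2 from by omega]
      rw [ih _ (by omega), ih _ (by omega)]
      exact mediant_onesub _ _

lemma onesub_mem (n j : ℕ) : 0 ≤ 1 - sb n j ∧ 1 - sb n j ≤ 1 := by
  have := sb_mem n j
  constructor <;> linarith [this.1, this.2]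

/-- For every `n ≥ 1`,
`W_{n+1} = { q/(2q−p), (q−p)/(2q−p) : p/q ∈ W_n }` (fractions in lowest terms,
`p = ` numerator, `q = ` denominator). -/
theorem sbNew_succ (n : ℕ) (hn : 1 ≤ n) :
    sbNew (n + 1) =
      (sbNew n).image (fun r => (r.den : ℚ) / (2 * (r.den : ℚ) - (r.num : ℚ))) ∪
      (sbNew n).image (fun r => ((r.den : ℚ) - (r.num : ℚ)) / (2 * (r.den : ℚ) - (r.num : ℚ))) := by
  have hm : 2 ^ n = 2 * 2 ^ (n - 1) := by
    conv_lhs => rw [show n = (n - 1) + 1 from (Nat.succ_pred_eq_of_pos hn).symm]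
    rw [pow_succ]; ring
  have hm1 : 1 ≤ 2 ^ (n - 1) := Nat.one_le_two_pow
  have hp : 2 ^ (n + 1) = 2 * 2 ^ n := by rw [pow_succ]; ring
  ext x
  simp only [sbNew, Finset.mem_union, Finset.mem_image, Finset.mem_filter, Finset.mem_range]
  constructor
  · rintro ⟨j, ⟨hj, hj2⟩, rfl⟩
    rcases lt_or_ge j (2 ^ n) with hlt | hge
    · right
      refine ⟨sb n (2 ^ n - j), ⟨2 ^ n - j, ⟨by omega, by omega⟩, rfl⟩, ?_⟩
      rw [sb_symm n j (le_of_lt hlt)]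
      rw [T2_eq (onesub_mem n j).1 (onesub_mem n j).2, sub_sub_cancel]
      exact (sb_succ_left n j (le_of_lt hlt)).symm
    · left
      have hjgt : 2 ^ n < j := by omega
      refine ⟨sb n (2 ^ n - (2 ^ (n + 1) - j)), ⟨2 ^ n - (2 ^ (n + 1) - j), ⟨by omega, by omega⟩, rfl⟩, ?_⟩
      have hsym := sb_symm (n + 1) (2 ^ (n + 1) - j) (by omega)
      rw [show 2 ^ (n + 1) - (2 ^ (n + 1) - j) = j from by omega] at hsym
      rw [sb_symm n (2 ^ (n + 1) - j) (by omega)]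
      rw [T1_eq (onesub_mem n _).1 (onesub_mem n _).2, sub_sub_cancel]
      rw [← sb_succ_left n (2 ^ (n + 1) - j) (by omega)]
      exact hsym.symm
  · rintro (⟨r, ⟨i, ⟨hi, hi2⟩, rfl⟩, rfl⟩ | ⟨r, ⟨i, ⟨hi, hi2⟩, rfl⟩, rfl⟩)
    · refine ⟨2 ^ n + i, ⟨by omega, by omega⟩, ?_⟩
      rw [show 2 ^ n + i = 2 ^ (n + 1) - (2 ^ n - i) from by omega]
      rw [sb_symm (n + 1) (2 ^ n - i) (by omega)]
      rw [sb_succ_left n (2 ^ n - i) (by omega)]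
      rw [sb_symm n i (by omega)]
      exact (T1_eq (sb_mem n i).1 (sb_mem n i).2).symm
    · refine ⟨2 ^ n - i, ⟨by omega, by omega⟩, ?_⟩
      rw [sb_succ_left n (2 ^ n - i) (by omega)]
      rw [sb_symm n i (by omega)]
      exact (T2_eq (sb_mem n i).1 (sb_mem n i).2).symm
end

section
/- For every n ≥ 1, the sum S_n = Σ_{p/q ∈ W_n} 1/q² over the new fractions W_n (in lowest terms) of the Stern-Brocot construction satisfies S_n ≤ 1. -/
lemma mediant_num_den (a b : ℚ) (h : b.num * a.den - a.num * b.den = 1) :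
    (mediant a b).num = a.num + b.num ∧ ((mediant a b).den : ℤ) = (a.den : ℤ) + b.den := by
  have hb0 : (0 : ℤ) < (a.den : ℤ) + b.den := by positivity
  have hcop : Nat.Coprime (a.num + b.num).natAbs ((a.den : ℤ) + b.den).natAbs := by
    have h1 : ((Int.gcd (a.num + b.num) ((a.den : ℤ) + b.den) : ℤ)) ∣ (a.num + b.num) :=
      Int.gcd_dvd_left _ _
    have h2 : ((Int.gcd (a.num + b.num) ((a.den : ℤ) + b.den) : ℤ)) ∣ ((a.den : ℤ) + b.den) :=
      Int.gcd_dvd_right _ _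
    have hd : ((Int.gcd (a.num + b.num) ((a.den : ℤ) + b.den) : ℤ)) ∣ 1 := by
      have := dvd_sub (h2.mul_left b.num) (h1.mul_right b.den)
      rwa [show b.num * ((a.den : ℤ) + b.den) - (a.num + b.num) * b.den = 1 by linarith] at this
    have : Int.gcd (a.num + b.num) ((a.den : ℤ) + b.den) = 1 :=
      Nat.dvd_one.mp (Int.natCast_dvd_natCast.mp (by exact_mod_cast hd))
    exact this
  constructor
  · simpa [mediant] using Rat.num_div_eq_of_coprime hb0 hcop
  · simpa [mediant] using Rat.den_div_eq_of_coprime hb0 hcop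

lemma sb_det : ∀ n j, j < 2 ^ n →
    (sb n (j + 1)).num * (sb n j).den - (sb n j).num * (sb n (j + 1)).den = 1 := by
  intro n
  induction n with
  | zero =>
    intro j hj
    interval_cases j
    simp [sb]
  | succ n ih =>
    intro j hj
    rcases Nat.even_or_odd j with ⟨k, hk⟩ | ⟨k, hk⟩
    · subst hk
      have hk2 : k < 2 ^ n := by
        have h2 : 2 ^ (n + 1) = 2 * 2 ^ n := pow_succ' 2 n
        omega
      have hd := ih k hk2
      have e1 : sb (n + 1) (k + k) = sb n k := by
        show sb (n+1) (k+k) = _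
        simp [sb, Nat.add_mul_mod_self_left, show (k + k) % 2 = 0 by omega,
          show (k + k) / 2 = k by omega]
      have e2 : sb (n + 1) (k + k + 1) = mediant (sb n k) (sb n (k + 1)) := by
        simp [sb, show (k + k + 1) % 2 = 1 by omega, show (k + k + 1) / 2 = k by omega]
      obtain ⟨hn, hdn⟩ := mediant_num_den (sb n k) (sb n (k + 1)) hd
      rw [e1, e2, hn]
      push_cast [hdn]
      linarith
    · subst hk
      have hk2 : k < 2 ^ n := by
        have h2 : 2 ^ (n + 1) = 2 * 2 ^ n := pow_succ' 2 n
        omega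
      have hd := ih k hk2
      have e1 : sb (n + 1) (2 * k + 1) = mediant (sb n k) (sb n (k + 1)) := by
        simp [sb, show (2 * k + 1) % 2 = 1 by omega, show (2 * k + 1) / 2 = k by omega]
      have e2 : sb (n + 1) (2 * k + 1 + 1) = sb n (k + 1) := by
        simp [sb, show (2 * k + 2) % 2 = 0 by omega, show (2 * k + 2) / 2 = k + 1 by omega]
      obtain ⟨hn, hdn⟩ := mediant_num_den (sb n k) (sb n (k + 1)) hd
      rw [e1, e2, hn]
      push_cast [hdn]
      linarith


lemma sb_lt_succ (n j : ℕ) (hj : j < 2 ^ n) : sb n j < sb n (j + 1) := by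
  rw [Rat.lt_iff]
  have := sb_det n j hj
  linarith

lemma sb_lt (n : ℕ) : ∀ j, ∀ i, i < j → j ≤ 2 ^ n → sb n i < sb n j := by
  intro j
  induction j with
  | zero => omega
  | succ j ih =>
    intro i hi hj
    rcases Nat.lt_or_ge i j with h | h
    · exact (ih i h (by omega)).trans (sb_lt_succ n j (by omega))
    · have : i = j := by omega
      subst this
      exact sb_lt_succ n i (by omega)

lemma sb_even (n k : ℕ) : sb (n + 1) (2 * k) = sb n k := by
  simp [sb, Nat.mul_mod_right, show (2 * k) / 2 = k by omega]

lemma sb_odd (n k : ℕ) : sb (n + 1) (2 * k + 1) = mediant (sb n k) (sb n (k + 1)) := by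
  simp [sb, show (2 * k + 1) % 2 = 1 by omega, show (2 * k + 1) / 2 = k by omega]

lemma sb_odd_den (n k : ℕ) (hk : k < 2 ^ n) :
    ((sb (n + 1) (2 * k + 1)).den : ℤ) = ((sb n k).den : ℤ) + (sb n (k + 1)).den := by
  rw [sb_odd]
  exact (mediant_num_den _ _ (sb_det n k hk)).2

lemma sum_range_two_mul (f : ℕ → ℚ) (m : ℕ) :
    ∑ j ∈ Finset.range (2 * m), f j = ∑ k ∈ Finset.range m, (f (2 * k) + f (2 * k + 1)) := by
  induction m with
  | zero => simp
  | succ m ih =>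
    rw [show 2 * (m + 1) = (2 * m + 1) + 1 by ring, Finset.sum_range_succ, Finset.sum_range_succ,
      Finset.sum_range_succ, ih]
    ring

lemma telescope (n : ℕ) :
    ∑ j ∈ Finset.range (2 ^ n), (1 : ℚ) / ((sb n j).den * (sb n (j + 1)).den) = 1 := by
  induction n with
  | zero => simp [sb]
  | succ n ih =>
    rw [show (2 : ℕ) ^ (n + 1) = 2 * 2 ^ n from pow_succ' 2 n, sum_range_two_mul]
    have key : ∀ k ∈ Finset.range (2 ^ n),
        ((1 : ℚ) / ((sb (n+1) (2*k)).den * (sb (n+1) (2*k+1)).den)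
          + 1 / ((sb (n+1) (2*k+1)).den * (sb (n+1) (2*k+1+1)).den))
        = 1 / ((sb n k).den * (sb n (k+1)).den) := by
      intro k hk
      have hk' : k < 2 ^ n := Finset.mem_range.mp hk
      have hden : ((sb (n + 1) (2 * k + 1)).den : ℚ) = ((sb n k).den : ℚ) + (sb n (k + 1)).den := by
        exact_mod_cast congrArg (fun z : ℤ => (z : ℚ)) (sb_odd_den n k hk')
      have e1 : sb (n + 1) (2 * k) = sb n k := sb_even n k
      have e2 : sb (n + 1) (2 * k + 1 + 1) = sb n (k + 1) := by
        rw [show 2 * k + 1 + 1 = 2 * (k + 1) by ring, sb_even]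
      rw [e1, e2, hden]
      have p1 : (0 : ℚ) < (sb n k).den := by exact_mod_cast (sb n k).pos
      have p2 : (0 : ℚ) < (sb n (k + 1)).den := by exact_mod_cast (sb n (k + 1)).pos
      field_simp
      ring
    rw [Finset.sum_congr rfl key, ih]

/-- For every `n ≥ 1`, `S_n = Σ_{p/q ∈ W_n} 1/q² ≤ 1`, where each element of
`W_n` is written in lowest terms as `p/q`. -/
theorem sum_inv_den_sq_le_one (n : ℕ) (hn : 1 ≤ n) :
    ∑ r ∈ sbNew n, (1 : ℚ) / (r.den : ℚ) ^ 2 ≤ 1 := by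
  obtain ⟨m, rfl⟩ : ∃ m, n = m + 1 := ⟨n - 1, by omega⟩
  have hinj : Set.InjOn (sb (m + 1))
      ((Finset.range (2 ^ (m + 1))).filter (fun j => j % 2 = 1) : Finset ℕ) := by
    intro i hi j hj hij
    simp only [Finset.coe_filter, Finset.mem_range, Set.mem_setOf_eq] at hi hj
    by_contra hne
    rcases Nat.lt_or_ge i j with h | h
    · exact absurd hij (ne_of_lt (sb_lt (m + 1) j i h (by omega)))
    · exact absurd hij.symm (ne_of_lt (sb_lt (m + 1) i j (by omega) (by omega)))
  rw [sbNew, Finset.sum_image (fun i hi j hj => hinj hi hj)]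
  have hfil : (Finset.range (2 ^ (m + 1))).filter (fun j => j % 2 = 1) =
      (Finset.range (2 ^ m)).image (fun k => 2 * k + 1) := by
    ext j
    simp only [Finset.mem_filter, Finset.mem_range, Finset.mem_image]
    have h2 : (2 : ℕ) ^ (m + 1) = 2 * 2 ^ m := pow_succ' 2 m
    constructor
    · rintro ⟨hj, hodd⟩
      exact ⟨j / 2, by omega, by omega⟩
    · rintro ⟨k, hk, rfl⟩
      omega
  rw [hfil, Finset.sum_image (by intro a _ b _ h; simp only at h; omega)]
  calc ∑ k ∈ Finset.range (2 ^ m), (1 : ℚ) / ((sb (m + 1) (2 * k + 1)).den : ℚ) ^ 2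
      ≤ ∑ k ∈ Finset.range (2 ^ m), (1 : ℚ) / ((sb m k).den * (sb m (k + 1)).den) := by
        apply Finset.sum_le_sum
        intro k hk
        have hk' : k < 2 ^ m := Finset.mem_range.mp hk
        have hden : ((sb (m + 1) (2 * k + 1)).den : ℚ)
            = ((sb m k).den : ℚ) + (sb m (k + 1)).den := by
          exact_mod_cast congrArg (fun z : ℤ => (z : ℚ)) (sb_odd_den m k hk')
        rw [hden]
        have p1 : (0 : ℚ) < (sb m k).den := by exact_mod_cast (sb m k).pos
        have p2 : (0 : ℚ) < (sb m (k + 1)).den := by exact_mod_cast (sb m (k + 1)).pos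
        rw [div_le_div_iff₀ (by positivity) (by positivity)]
        nlinarith
    _ = 1 := telescope m
end

section
/- Let T be the operator (Tf)(x) = f(1/(2−x))/(2−x)² − f(1/(1+x))/(1+x)² on C[1/2,1], let f_0 ∈ C[1/2,1] and f_n = T^n f_0. Then for every n ≥ 1 and every real y ≥ 1: f_n(y/(y+1)) = (y+1)² · ( f_0((y+n)/(y+n+1))/(y+n+1)² − Σ_{k=1}^{n} f_{n−k}((y+k)/(2y+2k−1))/(2y+2k−1)² ). -/
/-- The operator `T` on functions on `[1/2,1]`:
`(Tf)(x) = f(1/(2−x))/(2−x)² − f(1/(1+x))/(1+x)²`.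
(For `x ∈ [1/2,1]` both `1/(2−x)` and `1/(1+x)` lie in `[1/2,1]`.) -/
noncomputable def T (f : ℝ → ℝ) : ℝ → ℝ := fun x =>
  f (1 / (2 - x)) / (2 - x) ^ 2 - f (1 / (1 + x)) / (1 + x) ^ 2

lemma T_apply_key (g : ℝ → ℝ) (y : ℝ) (hy : 1 ≤ y) :
    T g (y / (y + 1)) =
      (y + 1) ^ 2 * (g ((y + 1) / (y + 2)) / (y + 2) ^ 2 -
        g ((y + 1) / (2 * y + 1)) / (2 * y + 1) ^ 2) := by
  have h1 : y + 1 ≠ 0 := by linarith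
  have h2 : y + 2 ≠ 0 := by linarith
  have h3 : 2 * y + 1 ≠ 0 := by linarith
  have h4 : 2 - y / (y + 1) = (y + 2) / (y + 1) := by field_simp; ring
  have h5 : 1 + y / (y + 1) = (2 * y + 1) / (y + 1) := by field_simp; ring
  simp only [T, h4, h5, one_div_div]
  field_simp

lemma sum_Icc_one (m : ℕ) (a : ℕ → ℝ) :
    ∑ k ∈ Finset.Icc 1 m, a k = ∑ i ∈ Finset.range m, a (1 + i) := by
  rw [← Finset.Ico_add_one_right_eq_Icc, Finset.sum_Ico_eq_sum_range]
  simp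

/-- The recurrence for `f_n = T^n f_0`: for every `n ≥ 1` and real `y ≥ 1`,
`f_n(y/(y+1)) = (y+1)²( f_0((y+n)/(y+n+1))/(y+n+1)²
  − Σ_{k=1}^n f_{n−k}((y+k)/(2y+2k−1))/(2y+2k−1)² )`. -/
theorem T_iterate_recurrence (f₀ : ℝ → ℝ)
    (hf : ContinuousOn f₀ (Set.Icc (1 / 2 : ℝ) 1))
    (n : ℕ) (hn : 1 ≤ n) (y : ℝ) (hy : 1 ≤ y) :
    (T^[n] f₀) (y / (y + 1)) =
      (y + 1) ^ 2 *
        (f₀ ((y + n) / (y + n + 1)) / (y + n + 1) ^ 2 -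
          ∑ k ∈ Finset.Icc 1 n,
            (T^[n - k] f₀) ((y + k) / (2 * y + 2 * k - 1)) / (2 * y + 2 * k - 1) ^ 2) := by
  induction n, hn using Nat.le_induction generalizing y with
  | base =>
      rw [Function.iterate_one, T_apply_key f₀ y hy]
      simp only [Finset.Icc_self, Finset.sum_singleton, Nat.sub_self,
        Function.iterate_zero, id, Nat.cast_one]
      ring_nf
  | succ n hn ih =>
      have hne : ((y + 2 : ℝ)) ^ 2 ≠ 0 := by positivity
      rw [Function.iterate_succ_apply', T_apply_key _ y hy]
      have hy1 : (1 : ℝ) ≤ y + 1 := by linarith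
      have ihy := ih (y + 1) hy1
      rw [show (y + 1) / (y + 2) = (y + 1) / ((y + 1) + 1) by ring_nf, ihy,
        show ((y + 1 + 1 : ℝ)) ^ 2 = (y + 2) ^ 2 by ring, mul_div_cancel_left₀ _ hne,
        sum_Icc_one, sum_Icc_one, Finset.sum_range_succ']
      simp only [show ∀ i : ℕ, n + 1 - (1 + (i + 1)) = n - (1 + i) from fun i => by omega]
      push_cast
      ring_nf
end

section
/- Let T be the operator (Tf)(x) = f(1/(2−x))/(2−x)² − f(1/(1+x))/(1+x)² on C[1/2,1]. Suppose f_0 = g_0 − h_0 where g_0, h_0 are nonnegative bounded increasing continuous functions on [1/2,1], and set M = max(sup g_0, sup h_0) and f_n = T^n f_0. Then for all n ≥ 0 and y ≥ 1: |f_n(y/(y+1))| ≤ 2M ((y+1)/(y+n+1))². -/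
namespace Taux

notation "I" => Set.Icc (1 / 2 : ℝ) 1

lemma mem1 {x : ℝ} (hx : x ∈ I) : 1 / (2 - x) ∈ I := by
  obtain ⟨h1, h2⟩ := hx
  constructor
  · rw [le_div_iff₀ (by linarith)]; linarith
  · rw [div_le_one (by linarith)]; linarith

lemma mem2 {x : ℝ} (hx : x ∈ I) : 1 / (1 + x) ∈ I := by
  obtain ⟨h1, h2⟩ := hx
  constructor
  · rw [le_div_iff₀ (by linarith)]; linarith
  · rw [div_le_one (by linarith)]; linarith

lemma mem_pt {y : ℝ} (hy : 1 ≤ y) : y / (y + 1) ∈ I := by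
  constructor
  · rw [le_div_iff₀ (by linarith)]; linarith
  · rw [div_le_one (by linarith)]; linarith

lemma T_good {g : ℝ → ℝ} (hm : MonotoneOn g I) (h0 : ∀ x ∈ I, 0 ≤ g x) :
    MonotoneOn (T g) I ∧ ∀ x ∈ I, 0 ≤ T g x := by
  constructor
  · intro x hx x' hx' hxx'
    obtain ⟨hx1, hx2⟩ := hx
    obtain ⟨hx1', hx2'⟩ := hx'
    have t1 : g (1 / (2 - x)) / (2 - x) ^ 2 ≤ g (1 / (2 - x')) / (2 - x') ^ 2 := by
      apply div_le_div₀ (le_trans (h0 _ (mem1 ⟨hx1, hx2⟩)) ?_) ?_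
        (pow_pos (by linarith : (0:ℝ) < 2 - x') 2) (by nlinarith)
      · exact hm (mem1 ⟨hx1, hx2⟩) (mem1 ⟨hx1', hx2'⟩)
          (by apply div_le_div_of_nonneg_left one_pos.le (by linarith) (by linarith))
      · exact hm (mem1 ⟨hx1, hx2⟩) (mem1 ⟨hx1', hx2'⟩)
          (by apply div_le_div_of_nonneg_left one_pos.le (by linarith) (by linarith))
    have t2 : g (1 / (1 + x')) / (1 + x') ^ 2 ≤ g (1 / (1 + x)) / (1 + x) ^ 2 := by
      apply div_le_div₀ (le_trans (h0 _ (mem2 ⟨hx1', hx2'⟩)) ?_) ?_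
        (pow_pos (by linarith : (0:ℝ) < 1 + x) 2) (by nlinarith)
      · exact hm (mem2 ⟨hx1', hx2'⟩) (mem2 ⟨hx1, hx2⟩)
          (by apply div_le_div_of_nonneg_left one_pos.le (by linarith) (by linarith))
      · exact hm (mem2 ⟨hx1', hx2'⟩) (mem2 ⟨hx1, hx2⟩)
          (by apply div_le_div_of_nonneg_left one_pos.le (by linarith) (by linarith))
    simp only [T]; linarith
  · intro x hx
    obtain ⟨hx1, hx2⟩ := hx
    have t : g (1 / (1 + x)) / (1 + x) ^ 2 ≤ g (1 / (2 - x)) / (2 - x) ^ 2 := by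
      apply div_le_div₀ (le_trans (h0 _ (mem2 ⟨hx1, hx2⟩)) ?_) ?_
        (pow_pos (by linarith : (0:ℝ) < 2 - x) 2) (by nlinarith)
      · exact hm (mem2 ⟨hx1, hx2⟩) (mem1 ⟨hx1, hx2⟩)
          (by apply div_le_div_of_nonneg_left one_pos.le (by linarith) (by linarith))
      · exact hm (mem2 ⟨hx1, hx2⟩) (mem1 ⟨hx1, hx2⟩)
          (by apply div_le_div_of_nonneg_left one_pos.le (by linarith) (by linarith))
    simp only [T]; linarith

lemma iter_good {g : ℝ → ℝ} (hm : MonotoneOn g I) (h0 : ∀ x ∈ I, 0 ≤ g x) (n : ℕ) :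
    MonotoneOn (T^[n] g) I ∧ ∀ x ∈ I, 0 ≤ (T^[n] g) x := by
  induction n with
  | zero => exact ⟨hm, h0⟩
  | succ n ih =>
      rw [Function.iterate_succ_apply']
      exact T_good ih.1 ih.2

lemma bound {g : ℝ → ℝ} {M : ℝ} (hm : MonotoneOn g I) (h0 : ∀ x ∈ I, 0 ≤ g x)
    (hbd : ∀ x ∈ I, g x ≤ M) :
    ∀ n : ℕ, ∀ y : ℝ, 1 ≤ y → (T^[n] g) (y / (y + 1)) ≤ M * ((y + 1) / (y + n + 1)) ^ 2 := by
  intro n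
  induction n with
  | zero =>
      intro y hy
      have h1 : (y + 1) / (y + (0:ℕ) + 1) = 1 := by
        push_cast; rw [add_zero]; exact div_self (by linarith)
      rw [h1]
      simpa using hbd _ (mem_pt hy)
  | succ n ih =>
      intro y hy
      have hy1 : (0:ℝ) < y + 1 := by linarith
      have hy0 : (0:ℝ) < y := by linarith
      have hn : (0:ℝ) ≤ (n:ℝ) := Nat.cast_nonneg n
      rw [Function.iterate_succ_apply']
      show T (T^[n] g) (y / (y + 1)) ≤ _
      have d1 : 2 - y / (y + 1) = (y + 2) / (y + 1) := by field_simp; ring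
      have d2 : 1 + y / (y + 1) = (2 * y + 1) / (y + 1) := by field_simp; ring
      have e1 : 1 / (2 - y / (y + 1)) = (y + 1) / ((y + 1) + 1) := by
        rw [d1, one_div_div]; ring_nf
      have hz : (1:ℝ) ≤ (y + 1) / y := by rw [le_div_iff₀ hy0]; linarith
      have e2 : 1 / (1 + y / (y + 1)) = ((y + 1) / y) / ((y + 1) / y + 1) := by
        rw [d2, one_div_div]
        field_simp
        ring
      have hnn : 0 ≤ T^[n] g (1 / (1 + y / (y + 1))) / (1 + y / (y + 1)) ^ 2 := by
        apply div_nonneg _ (sq_nonneg _)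
        apply (iter_good hm h0 n).2
        rw [e2]
        have := mem_pt hz
        convert this using 2
      have hb1 : T^[n] g (1 / (2 - y / (y + 1))) ≤ M * (((y + 1) + 1) / ((y + 1) + n + 1)) ^ 2 := by
        rw [e1]; exact ih (y + 1) (by linarith)
      have hdpos : (0:ℝ) < (2 - y / (y + 1)) ^ 2 := by
        rw [d1]; positivity
      calc T (T^[n] g) (y / (y + 1))
          ≤ T^[n] g (1 / (2 - y / (y + 1))) / (2 - y / (y + 1)) ^ 2 := by
            simp only [T]; linarith
        _ ≤ (M * (((y + 1) + 1) / ((y + 1) + n + 1)) ^ 2) / (2 - y / (y + 1)) ^ 2 := by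
            exact div_le_div_of_nonneg_right hb1 hdpos.le |>.trans_eq rfl
        _ = M * ((y + 1) / (y + (n + 1 : ℕ) + 1)) ^ 2 := by
            rw [d1]
            have h2 : (0:ℝ) < y + 2 := by linarith
            have h3 : (0:ℝ) < y + (n:ℝ) + 2 := by linarith
            push_cast
            field_simp
            ring

lemma split {f g h : ℝ → ℝ} (hf : ∀ x ∈ I, f x = g x - h x) (n : ℕ) :
    ∀ x ∈ I, (T^[n] f) x = (T^[n] g) x - (T^[n] h) x := by
  induction n with
  | zero => exact hf
  | succ n ih =>
      intro x hx
      simp only [Function.iterate_succ_apply', T]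
      rw [ih _ (mem1 hx), ih _ (mem2 hx)]
      ring

end Taux

/-- If `f₀ = g₀ − h₀` with `g₀, h₀` nonnegative bounded increasing continuous
functions on `[1/2,1]` and `M = max(sup g₀, sup h₀)`, then for all `n ≥ 0` and
`y ≥ 1`: `|f_n(y/(y+1))| ≤ 2M((y+1)/(y+n+1))²`, where `f_n = T^n f₀`. -/
theorem T_iterate_bound (f₀ g₀ h₀ : ℝ → ℝ)
    (hg : ContinuousOn g₀ (Set.Icc (1 / 2 : ℝ) 1))
    (hh : ContinuousOn h₀ (Set.Icc (1 / 2 : ℝ) 1))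
    (hgm : MonotoneOn g₀ (Set.Icc (1 / 2 : ℝ) 1))
    (hhm : MonotoneOn h₀ (Set.Icc (1 / 2 : ℝ) 1))
    (hg0 : ∀ x ∈ Set.Icc (1 / 2 : ℝ) 1, 0 ≤ g₀ x)
    (hh0 : ∀ x ∈ Set.Icc (1 / 2 : ℝ) 1, 0 ≤ h₀ x)
    (hf : ∀ x ∈ Set.Icc (1 / 2 : ℝ) 1, f₀ x = g₀ x - h₀ x)
    (M : ℝ)
    (hM : M = max (sSup (g₀ '' Set.Icc (1 / 2 : ℝ) 1)) (sSup (h₀ '' Set.Icc (1 / 2 : ℝ) 1)))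
    (n : ℕ) (y : ℝ) (hy : 1 ≤ y) :
    |(T^[n] f₀) (y / (y + 1))| ≤ 2 * M * ((y + 1) / (y + n + 1)) ^ 2 := by
  have hcpt : IsCompact (Set.Icc (1 / 2 : ℝ) 1) := isCompact_Icc
  have hbg : ∀ x ∈ Set.Icc (1 / 2 : ℝ) 1, g₀ x ≤ M := by
    intro x hx
    refine le_trans (le_csSup (hcpt.bddAbove_image hg) (Set.mem_image_of_mem _ hx)) ?_
    rw [hM]; exact le_max_left _ _
  have hbh : ∀ x ∈ Set.Icc (1 / 2 : ℝ) 1, h₀ x ≤ M := by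
    intro x hx
    refine le_trans (le_csSup (hcpt.bddAbove_image hh) (Set.mem_image_of_mem _ hx)) ?_
    rw [hM]; exact le_max_right _ _
  have hmem : y / (y + 1) ∈ Set.Icc (1 / 2 : ℝ) 1 := Taux.mem_pt hy
  have hM0 : 0 ≤ M := le_trans (hg0 _ hmem) (hbg _ hmem)
  have hG := Taux.bound hgm hg0 hbg n y hy
  have hH := Taux.bound hhm hh0 hbh n y hy
  have hG0 := (Taux.iter_good hgm hg0 n).2 _ hmem
  have hH0 := (Taux.iter_good hhm hh0 n).2 _ hmem
  rw [Taux.split hf n _ hmem, abs_le]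
  constructor <;> nlinarith [sq_nonneg ((y + 1) / (y + n + 1))]
end
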